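/- arXiv:math/9811102 — 3 statements merged into one kernel-verified Lean document; each statement's English description precedes it below -/
import Mathlib

section
/- Let $G=C_2\times C_2=\langle x\rangle\times\langle y\rangle$ be the Klein four-group. Then $\mathbb{B}_G$ is cyclic of order 2, generated by the element $[x,y,xy]$. -/
open Finsupp

/-- The natural map from conjugacy classes of `G` to the abelianization of `G`. -/
def conjToAb {G : Type*} [Group G] : ConjClasses G → Abelianization G :=
  Quotient.lift Abelianization.of (fun a b (h : IsConj a b) => by
    obtain ⟨c, hc⟩ := h
    have : Abelianization.of (c * a) = Abelianization.of (b * c) := by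
      rw [hc.eq]
    simpa [map_mul, mul_comm] using this)

@[simp] lemma conjToAb_mk {G : Type*} [Group G] (a : G) :
    conjToAb (ConjClasses.mk a) = Abelianization.of a := rfl

/-- The degree map sending a formal `ℤ`-combination of conjugacy classes to the corresponding
product in the abelianization. -/
noncomputable def degMap (G : Type*) [Group G] :
    (ConjClasses G →₀ ℤ) →+ Additive (Abelianization G) :=
  Finsupp.liftAddHom (fun c => (zmultiplesHom _) (Additive.ofMul (conjToAb c)))

@[simp] lemma degMap_single {G : Type*} [Group G] (a : G) (k : ℤ) :
    degMap G (Finsupp.single (ConjClasses.mk a) k)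
      = k • (Additive.ofMul (Abelianization.of a)) := by
  simp [degMap]

/-- `lambdaKer G` consists of the formal `ℤ`-combinations of conjugacy classes whose product
lies in the commutator subgroup; these are the (differences of) singular orbit data. -/
noncomputable def lambdaKer (G : Type*) [Group G] : AddSubgroup (ConjClasses G →₀ ℤ) :=
  (degMap G).ker

/-- The subgroup of relations: the class of the identity, and the cancelling pairs
`[γ̂, γ̂⁻¹]`. -/
noncomputable def bRel (G : Type*) [Group G] : AddSubgroup (ConjClasses G →₀ ℤ) :=
  AddSubgroup.closure
    (insert (Finsupp.single (ConjClasses.mk (1 : G)) 1)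
      {x | ∃ γ : G, x = Finsupp.single (ConjClasses.mk γ) 1
        + Finsupp.single (ConjClasses.mk γ⁻¹) 1})

/-- The group of singular orbit data `𝔹_G`. -/
abbrev BG (G : Type*) [Group G] :=
  (lambdaKer G) ⧸ ((bRel G).addSubgroupOf (lambdaKer G))

/-- The formal sum of conjugacy classes corresponding to a finite (multi)set of group
elements, presented as a list. -/
noncomputable def bdatum (G : Type*) [Group G] (l : List G) : ConjClasses G →₀ ℤ :=
  (l.map (fun γ => Finsupp.single (ConjClasses.mk γ) (1 : ℤ))).sum

lemma degMap_bdatum {G : Type*} [Group G] (l : List G) :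
    degMap G (bdatum G l) = Additive.ofMul (Abelianization.of l.prod) := by
  induction l with
  | nil => simp [bdatum]
  | cons a t ih =>
      have : bdatum G (a :: t) = Finsupp.single (ConjClasses.mk a) 1 + bdatum G t := by
        simp [bdatum]
      rw [this, map_add, ih, degMap_single]
      simp [← ofMul_mul]

lemma bdatum_mem_lambdaKer {G : Type*} [Group G] (l : List G)
    (h : l.prod ∈ commutator G) : bdatum G l ∈ lambdaKer G := by
  have : Abelianization.of l.prod = 1 := (QuotientGroup.eq_one_iff _).2 h
  simp [lambdaKer, AddMonoidHom.mem_ker, degMap_bdatum, this]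

lemma bdatum_mem_lambdaKer_of_prod_eq_one {G : Type*} [Group G] (l : List G)
    (h : l.prod = 1) : bdatum G l ∈ lambdaKer G :=
  bdatum_mem_lambdaKer l (by simp [h, Subgroup.one_mem])

/-- The element of `𝔹_G` determined by a list of group elements whose product lies in the
commutator subgroup. -/
noncomputable def bmk {G : Type*} [Group G] (l : List G) (h : bdatum G l ∈ lambdaKer G) :
    BG G :=
  QuotientAddGroup.mk (⟨bdatum G l, h⟩ : lambdaKer G)

lemma bdatum_triple_mem {G : Type*} [Group G] (a b c : G) (h : a * b * c = 1) :
    bdatum G [a, b, c] ∈ lambdaKer G :=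
  bdatum_mem_lambdaKer_of_prod_eq_one _ (by simpa [mul_assoc] using h)

/-- The first standard generator of the Klein four group. -/
def xk : Multiplicative (ZMod 2 × ZMod 2) := Multiplicative.ofAdd (1, 0)

/-- The second standard generator of the Klein four group. -/
def yk : Multiplicative (ZMod 2 × ZMod 2) := Multiplicative.ofAdd (0, 1)

section KleinAux

local notation "K" => Multiplicative (ZMod 2 × ZMod 2)

noncomputable def phiK : (ConjClasses K →₀ ℤ) →+ ZMod 2 :=
  (Int.castAddHom (ZMod 2)).comp (Finsupp.applyAddHom (ConjClasses.mk xk))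

lemma phiK_apply (f : ConjClasses K →₀ ℤ) :
    phiK f = ((f (ConjClasses.mk xk) : ℤ) : ZMod 2) := rfl

lemma phiK_single (g : K) (k : ℤ) :
    phiK (Finsupp.single (ConjClasses.mk g) k) = if g = xk then (k : ZMod 2) else 0 := by
  rw [phiK_apply, Finsupp.single_apply]
  simp only [ConjClasses.mk_injective.eq_iff]
  split_ifs <;> simp

lemma K_inv_eq (g : K) : g⁻¹ = g := by revert g; decide

lemma K_cases (g : K) : g = 1 ∨ g = xk ∨ g = yk ∨ g = xk * yk := by
  revert g; decide

lemma decomposeK (f : ConjClasses K →₀ ℤ) :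
    f = Finsupp.single (ConjClasses.mk (1 : K)) (f (ConjClasses.mk (1 : K)))
      + Finsupp.single (ConjClasses.mk xk) (f (ConjClasses.mk xk))
      + Finsupp.single (ConjClasses.mk yk) (f (ConjClasses.mk yk))
      + Finsupp.single (ConjClasses.mk (xk * yk)) (f (ConjClasses.mk (xk * yk))) := by
  ext c
  obtain ⟨g, rfl⟩ := ConjClasses.mk_surjective c
  rcases K_cases g with rfl | rfl | rfl | rfl <;>
    · simp only [Finsupp.add_apply, Finsupp.single_apply, ConjClasses.mk_injective.eq_iff]
      norm_num [show (1 : K) ≠ xk from by decide, show (1 : K) ≠ yk from by decide,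
        show (1 : K) ≠ xk * yk from by decide, show xk ≠ (1 : K) from by decide,
        show xk ≠ yk from by decide, show xk ≠ xk * yk from by decide,
        show yk ≠ (1 : K) from by decide, show yk ≠ xk from by decide,
        show yk ≠ xk * yk from by decide, show xk * yk ≠ (1 : K) from by decide,
        show xk * yk ≠ xk from by decide, show xk * yk ≠ yk from by decide]

lemma klein_pow_eq_one {b c d : ℤ}
    (h : xk ^ b * yk ^ c * (xk * yk) ^ d = 1) :
    ((b : ZMod 2) + (d : ZMod 2) = 0) ∧ ((c : ZMod 2) + (d : ZMod 2) = 0) := by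
  have h2 := congrArg Multiplicative.toAdd h
  simp only [toAdd_mul, toAdd_zpow, toAdd_one] at h2
  have hx : Multiplicative.toAdd xk = ((1 : ZMod 2), (0 : ZMod 2)) := rfl
  have hy : Multiplicative.toAdd yk = ((0 : ZMod 2), (1 : ZMod 2)) := rfl
  rw [hx, hy] at h2
  have hfst := congrArg Prod.fst h2
  have hsnd := congrArg Prod.snd h2
  simp only [Prod.fst_add, Prod.snd_add, Prod.smul_mk, Prod.mk_add_mk, Prod.smul_fst,
    Prod.smul_snd, zsmul_eq_mul, mul_one, mul_zero, Prod.fst_zero, Prod.snd_zero,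
    smul_zero, add_zero, zero_add] at hfst hsnd
  constructor
  · linear_combination hfst
  · linear_combination hsnd

lemma coeffs_of_mem_lambdaKer {f : ConjClasses K →₀ ℤ} (hf : f ∈ lambdaKer K) :
    ((f (ConjClasses.mk xk) : ZMod 2) + (f (ConjClasses.mk (xk * yk)) : ZMod 2) = 0) ∧
    ((f (ConjClasses.mk yk) : ZMod 2) + (f (ConjClasses.mk (xk * yk)) : ZMod 2) = 0) := by
  set a := f (ConjClasses.mk (1 : K))
  set b := f (ConjClasses.mk xk)
  set c := f (ConjClasses.mk yk)
  set d := f (ConjClasses.mk (xk * yk))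
  have h0 : degMap K f = 0 := hf
  rw [decomposeK f] at h0
  simp only [map_add, degMap_single] at h0
  have hone : Additive.ofMul (Abelianization.of (1 : K)) = 0 := by simp
  rw [hone, smul_zero, zero_add] at h0
  have hprod : Additive.ofMul (Abelianization.of (xk ^ b * yk ^ c * (xk * yk) ^ d)) = 0 := by
    have heq : Abelianization.of (xk ^ b * yk ^ c * (xk * yk) ^ d)
        = Abelianization.of xk ^ b * Abelianization.of yk ^ c
          * Abelianization.of (xk * yk) ^ d := by
      simp [map_mul, map_zpow]
    rw [heq, ofMul_mul, ofMul_mul, ofMul_zpow, ofMul_zpow, ofMul_zpow]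
    exact h0
  have hab : Abelianization.of (xk ^ b * yk ^ c * (xk * yk) ^ d) = 1 := by
    exact_mod_cast hprod
  have : xk ^ b * yk ^ c * (xk * yk) ^ d = 1 := by
    have hinj : Function.Injective (Abelianization.of (G := K)) :=
      (Abelianization.equivOfComm (H := K)).injective
    exact hinj (by rw [hab]; exact (map_one Abelianization.of).symm)
  exact klein_pow_eq_one this

lemma genK_mem_bRel (g : K) :
    Finsupp.single (ConjClasses.mk g) 1 + Finsupp.single (ConjClasses.mk g) 1 ∈ bRel K := by
  apply AddSubgroup.subset_closure
  exact Set.mem_insert_iff.2 (Or.inr ⟨g, by rw [K_inv_eq g]⟩)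

lemma one_single_mem_bRel : Finsupp.single (ConjClasses.mk (1 : K)) (1 : ℤ) ∈ bRel K :=
  AddSubgroup.subset_closure (Set.mem_insert _ _)

lemma single_even_mem_bRel (g : K) {b : ℤ} (hb : 2 ∣ b) :
    Finsupp.single (ConjClasses.mk g) b ∈ bRel K := by
  obtain ⟨b', rfl⟩ := hb
  have : Finsupp.single (ConjClasses.mk g) (2 * b')
      = b' • (Finsupp.single (ConjClasses.mk g) (1 : ℤ)
          + Finsupp.single (ConjClasses.mk g) (1 : ℤ)) := by
    rw [smul_add, Finsupp.smul_single, ← Finsupp.single_add, smul_eq_mul, mul_one, two_mul]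
  rw [this]
  exact AddSubgroup.zsmul_mem _ (genK_mem_bRel g) b'

lemma mem_bRel_of_mem_lambdaKer {f : ConjClasses K →₀ ℤ} (hf : f ∈ lambdaKer K)
    (h0 : phiK f = 0) : f ∈ bRel K := by
  obtain ⟨h1, h2⟩ := coeffs_of_mem_lambdaKer hf
  rw [phiK_apply] at h0
  have hb : (2 : ℤ) ∣ f (ConjClasses.mk xk) :=
    (ZMod.intCast_zmod_eq_zero_iff_dvd _ 2).1 h0
  have hd : (2 : ℤ) ∣ f (ConjClasses.mk (xk * yk)) := by
    apply (ZMod.intCast_zmod_eq_zero_iff_dvd _ 2).1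
    rw [h0, zero_add] at h1
    exact h1
  have hc : (2 : ℤ) ∣ f (ConjClasses.mk yk) := by
    apply (ZMod.intCast_zmod_eq_zero_iff_dvd _ 2).1
    have : ((f (ConjClasses.mk (xk * yk)) : ℤ) : ZMod 2) = 0 :=
      (ZMod.intCast_zmod_eq_zero_iff_dvd _ 2).2 hd
    rw [this, add_zero] at h2
    exact h2
  rw [decomposeK f]
  refine AddSubgroup.add_mem _ (AddSubgroup.add_mem _ (AddSubgroup.add_mem _ ?_ ?_) ?_) ?_
  · have : Finsupp.single (ConjClasses.mk (1 : K)) (f (ConjClasses.mk (1 : K)))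
        = (f (ConjClasses.mk (1 : K))) • Finsupp.single (ConjClasses.mk (1 : K)) (1 : ℤ) := by
      rw [Finsupp.smul_single, smul_eq_mul, mul_one]
    rw [this]
    exact AddSubgroup.zsmul_mem _ one_single_mem_bRel _
  · exact single_even_mem_bRel _ hb
  · exact single_even_mem_bRel _ hc
  · exact single_even_mem_bRel _ hd

lemma bRel_le_ker_phiK : bRel K ≤ phiK.ker := by
  apply AddSubgroup.closure_le _ |>.2
  intro x hx
  rcases Set.mem_insert_iff.1 hx with rfl | ⟨γ, rfl⟩
  · simp only [SetLike.mem_coe, AddMonoidHom.mem_ker, phiK_single]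
    rw [if_neg (by decide)]
  · simp only [SetLike.mem_coe, AddMonoidHom.mem_ker, map_add, phiK_single, K_inv_eq]
    split_ifs <;> decide

noncomputable def psiK : BG K →+ ZMod 2 :=
  QuotientAddGroup.lift _ (phiK.comp (AddSubgroup.subtype (lambdaKer K)))
    (fun x hx => bRel_le_ker_phiK hx)

lemma psiK_inj : Function.Injective psiK := by
  rw [injective_iff_map_eq_zero]
  intro q hq
  induction q using QuotientAddGroup.induction_on with
  | H x =>
    rw [QuotientAddGroup.eq_zero_iff]
    exact mem_bRel_of_mem_lambdaKer x.2 hq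

lemma psiK_gen : psiK (bmk [xk, yk, xk * yk] (bdatum_triple_mem _ _ _ (by decide))) = 1 := by
  show phiK (bdatum _ [xk, yk, xk * yk]) = 1
  have : bdatum K [xk, yk, xk * yk]
      = Finsupp.single (ConjClasses.mk xk) 1 + Finsupp.single (ConjClasses.mk yk) 1
        + Finsupp.single (ConjClasses.mk (xk * yk)) 1 := by
    simp [bdatum, add_assoc]
  rw [this]
  simp only [map_add, phiK_single]
  simp [show yk ≠ xk from by decide, show xk * yk ≠ xk from by decide]

lemma psiK_surj : Function.Surjective psiK := by
  intro z
  have : z = 0 ∨ z = 1 := by revert z; decide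
  rcases this with rfl | rfl
  · exact ⟨0, map_zero _⟩
  · exact ⟨_, psiK_gen⟩

end KleinAux
/-- For the Klein four group `G = C₂ × C₂`, the group `𝔹_G` is cyclic of
order 2, generated by `[x, y, xy]`. -/
theorem BG_klein_four_cyclic_of_order_two :
    Nat.card (BG (Multiplicative (ZMod 2 × ZMod 2))) = 2 ∧
    AddSubgroup.zmultiples
        (bmk [xk, yk, xk * yk] (bdatum_triple_mem _ _ _ (by decide))) = ⊤ := by
  constructor
  · have e : BG (Multiplicative (ZMod 2 × ZMod 2)) ≃ ZMod 2 :=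
      (AddEquiv.ofBijective psiK ⟨psiK_inj, psiK_surj⟩).toEquiv
    rw [Nat.card_congr e]
    simp
  · rw [AddSubgroup.eq_top_iff']
    intro q
    have hz : psiK q = 0 ∨ psiK q = 1 := by
      generalize psiK q = z; revert z; decide
    rcases hz with h | h
    · have : q = 0 := psiK_inj (by rw [h, map_zero])
      rw [this]; exact AddSubgroup.zero_mem _
    · have : q = bmk [xk, yk, xk * yk] (bdatum_triple_mem _ _ _ (by decide)) := by
        apply psiK_inj
        rw [h, psiK_gen]
      rw [this]
      exact AddSubgroup.mem_zmultiples _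
end

section
/- Let $G=S_3$ be the symmetric group on three letters and let $a\in S_3$ be an element of order 3 with conjugacy class $\hat a$. Then $\mathbb{B}_{S_3}$ is cyclic of order 2, generated by the one-element datum $[\hat a]$; in particular $2\cdot[\hat a]=0$ and $[\hat a]\neq 0$. -/
open Finsupp

lemma abelianization_of_eq_one_of_orderOf_eq_three (a : Equiv.Perm (Fin 3))
    (ha : orderOf a = 3) : Abelianization.of a = 1 := by
  have h3 : a ^ 3 = 1 := by
    have := pow_orderOf_eq_one a
    rwa [ha] at this
  have hconj : ∃ b : Equiv.Perm (Fin 3), b * a * b⁻¹ = a⁻¹ := by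
    clear ha
    revert h3
    revert a
    decide
  obtain ⟨b, hb⟩ := hconj
  have h2 : Abelianization.of a⁻¹ = Abelianization.of a := by
    calc Abelianization.of a⁻¹ = Abelianization.of (b * a * b⁻¹) := by rw [hb]
      _ = Abelianization.of b * Abelianization.of a * (Abelianization.of b)⁻¹ := by
          simp [map_mul]
      _ = Abelianization.of a := by
          rw [mul_comm (Abelianization.of b) (Abelianization.of a), mul_inv_cancel_right]
  have h4 : Abelianization.of a ^ 2 = 1 := by
    rw [pow_two]
    nth_rewrite 1 [← h2]
    simp
  have h5 : Abelianization.of a ^ 3 = 1 := by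
    rw [← map_pow, h3, map_one]
  calc Abelianization.of a = Abelianization.of a ^ 3 * (Abelianization.of a ^ 2)⁻¹ := by
        group
    _ = 1 := by rw [h4, h5]; simp

lemma bdatum_single_mem (a : Equiv.Perm (Fin 3)) (ha : orderOf a = 3) :
    bdatum (Equiv.Perm (Fin 3)) [a] ∈ lambdaKer (Equiv.Perm (Fin 3)) := by
  have h1 : Abelianization.of a = 1 :=
    abelianization_of_eq_one_of_orderOf_eq_three a ha
  simp [lambdaKer, AddMonoidHom.mem_ker, degMap_bdatum, h1]

-- ===== auxiliary development =====
section Aux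

open Equiv Equiv.Perm

local notation "G3" => Equiv.Perm (Fin 3)

noncomputable def tauCl : ConjClasses G3 := ConjClasses.mk (Equiv.swap 0 1)

/-- coefficient at the class of `a`, mod 2 -/
noncomputable def phiA (a : G3) : (ConjClasses G3 →₀ ℤ) →+ ZMod 2 :=
  (Int.castAddHom (ZMod 2)).comp (Finsupp.applyAddHom (ConjClasses.mk a))

lemma phiA_apply (a : G3) (x : ConjClasses G3 →₀ ℤ) :
    phiA a x = ((x (ConjClasses.mk a) : ℤ) : ZMod 2) := rfl

variable {a : G3}

lemma conj_inv_iff (ha3 : a ^ 3 = 1) (hane : a ≠ 1) : ∀ γ : G3, IsConj a γ ↔ IsConj a γ⁻¹ := by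
  revert ha3 hane; revert a; decide

lemma isConj_a_inv (ha3 : a ^ 3 = 1) (hane : a ≠ 1) : IsConj a a⁻¹ := by
  revert ha3 hane; revert a; decide

lemma not_isConj_one_a (ha3 : a ^ 3 = 1) (hane : a ≠ 1) : ¬ IsConj 1 a := by
  revert ha3 hane; revert a; decide

lemma not_isConj_one_tau : ¬ IsConj (1 : G3) (Equiv.swap 0 1) := by decide

lemma not_isConj_a_tau (ha3 : a ^ 3 = 1) (hane : a ≠ 1) : ¬ IsConj a (Equiv.swap 0 1) := by
  revert ha3 hane; revert a; decide

lemma sign_a (ha3 : a ^ 3 = 1) (hane : a ≠ 1) : Equiv.Perm.sign a = 1 := by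
  revert ha3 hane; revert a; decide

lemma classes_cover (ha3 : a ^ 3 = 1) (hane : a ≠ 1) : ∀ c : ConjClasses G3,
    c = ConjClasses.mk 1 ∨ c = ConjClasses.mk a ∨ c = tauCl := by
  have key : ∀ γ : G3, IsConj 1 γ ∨ IsConj a γ ∨ IsConj (Equiv.swap 0 1) γ := by
    revert ha3 hane; revert a; decide
  intro c
  obtain ⟨γ, rfl⟩ := ConjClasses.exists_rep c
  rcases key γ with h | h | h
  · exact Or.inl (ConjClasses.mk_eq_mk_iff_isConj.2 h.symm)
  · exact Or.inr (Or.inl (ConjClasses.mk_eq_mk_iff_isConj.2 h.symm))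
  · exact Or.inr (Or.inr (ConjClasses.mk_eq_mk_iff_isConj.2 h.symm))

lemma decomp (ha3 : a ^ 3 = 1) (hane : a ≠ 1) (x : ConjClasses G3 →₀ ℤ) :
    x = Finsupp.single (ConjClasses.mk 1) (x (ConjClasses.mk 1))
      + Finsupp.single (ConjClasses.mk a) (x (ConjClasses.mk a))
      + Finsupp.single tauCl (x tauCl) := by
  classical
  have h1a : (ConjClasses.mk (1:G3)) ≠ ConjClasses.mk a := fun h =>
    not_isConj_one_a ha3 hane (ConjClasses.mk_eq_mk_iff_isConj.1 h)
  have h1t : (ConjClasses.mk (1:G3)) ≠ tauCl := fun h =>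
    not_isConj_one_tau (ConjClasses.mk_eq_mk_iff_isConj.1 h)
  have hat : (ConjClasses.mk a) ≠ tauCl := fun h =>
    not_isConj_a_tau ha3 hane (ConjClasses.mk_eq_mk_iff_isConj.1 h)
  ext c
  rcases classes_cover ha3 hane c with rfl | rfl | rfl
  · simp [Finsupp.single_apply, h1a, h1t, hat, h1a.symm, h1t.symm, hat.symm]
  · simp [Finsupp.single_apply, h1a, h1t, hat, h1a.symm, h1t.symm, hat.symm]
  · simp [Finsupp.single_apply, h1a, h1t, hat, h1a.symm, h1t.symm, hat.symm]

lemma bRel_le_ker (ha3 : a ^ 3 = 1) (hane : a ≠ 1) : bRel G3 ≤ (phiA a).ker := by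
  classical
  rw [bRel, AddSubgroup.closure_le]
  rintro x (rfl | ⟨γ, rfl⟩)
  · have h1a : (ConjClasses.mk (1:G3)) ≠ ConjClasses.mk a := fun h =>
      not_isConj_one_a ha3 hane (ConjClasses.mk_eq_mk_iff_isConj.1 h)
    refine AddMonoidHom.mem_ker.mpr ?_
    rw [phiA_apply, Finsupp.single_apply, if_neg h1a]
    simp
  · refine AddMonoidHom.mem_ker.mpr ?_
    rw [map_add, phiA_apply, phiA_apply, Finsupp.single_apply, Finsupp.single_apply]
    by_cases h : ConjClasses.mk γ = ConjClasses.mk a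
    · have h' : ConjClasses.mk γ⁻¹ = ConjClasses.mk a := by
        rw [ConjClasses.mk_eq_mk_iff_isConj] at h ⊢
        exact (((conj_inv_iff ha3 hane γ).1 h.symm).symm)
      rw [if_pos h, if_pos h']
      decide
    · have h' : ConjClasses.mk γ⁻¹ ≠ ConjClasses.mk a := by
        intro hh
        apply h
        rw [ConjClasses.mk_eq_mk_iff_isConj] at hh ⊢
        have := (conj_inv_iff ha3 hane γ).2 hh.symm
        exact this.symm
      rw [if_neg h, if_neg h']
      simp

lemma even_tau_of_mem_lambdaKer (ha3 : a ^ 3 = 1) (hane : a ≠ 1) {x : ConjClasses G3 →₀ ℤ}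
    (hx : x ∈ lambdaKer G3) : Even (x tauCl) := by
  set Ψ : Additive (Abelianization G3) →+ Additive ℤˣ :=
    MonoidHom.toAdditive (Abelianization.lift (Equiv.Perm.sign (α := Fin 3)))
  have h0 : Ψ (degMap G3 x) = 0 := by
    have : degMap G3 x = 0 := hx
    rw [this, map_zero]
  rw [decomp ha3 hane x] at h0
  simp only [map_add] at h0
  -- compute each piece under Ψ ∘ degMap
  have key : ∀ (γ : G3) (k : ℤ),
      Ψ (degMap G3 (Finsupp.single (ConjClasses.mk γ) k))
        = Additive.ofMul ((Equiv.Perm.sign γ : ℤˣ) ^ k) := by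
    intro γ k
    rw [degMap_single, map_zsmul, ofMul_zpow]
    congr 1
  rw [show tauCl = ConjClasses.mk (Equiv.swap 0 1) from rfl] at h0
  rw [key, key, key] at h0
  rw [sign_a ha3 hane] at h0
  have hsw : Equiv.Perm.sign (Equiv.swap (0:Fin 3) 1) = -1 := by decide
  rw [hsw, map_one, one_zpow, one_zpow] at h0
  simp only [ofMul_one, zero_add] at h0
  -- h0 : Additive.ofMul ((-1 : ℤˣ) ^ (x tauCl)) = 0
  by_contra hodd
  rw [Int.not_even_iff_odd] at hodd
  obtain ⟨k, hk⟩ := hodd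
  rw [show tauCl = ConjClasses.mk (Equiv.swap (0:Fin 3) 1) from rfl] at hk
  rw [hk] at h0
  have : ((-1 : ℤˣ)) ^ (2 * k + 1) = -1 := by
    rw [zpow_add, zpow_mul]
    have h2 : ((-1 : ℤˣ)) ^ (2:ℤ) = 1 := by
      rw [show (2:ℤ) = ((2:ℕ):ℤ) from rfl, zpow_natCast]; decide
    rw [h2, one_zpow, zpow_one, one_mul]
  rw [this] at h0
  exact absurd (Additive.ofMul.injective (h0.trans (ofMul_one (α := ℤˣ)).symm)) (by decide)

lemma mem_bRel_of_even (ha3 : a ^ 3 = 1) (hane : a ≠ 1) {x : ConjClasses G3 →₀ ℤ}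
    (hA : Even (x (ConjClasses.mk a))) (hT : Even (x tauCl)) : x ∈ bRel G3 := by
  obtain ⟨ka, hka⟩ := hA
  obtain ⟨kt, hkt⟩ := hT
  have g1 : Finsupp.single (ConjClasses.mk (1:G3)) 1 ∈ bRel G3 :=
    AddSubgroup.subset_closure (Set.mem_insert _ _)
  have ga : Finsupp.single (ConjClasses.mk a) 1
      + Finsupp.single (ConjClasses.mk a⁻¹) 1 ∈ bRel G3 :=
    AddSubgroup.subset_closure (Set.mem_insert_of_mem _ ⟨a, rfl⟩)
  have gt : Finsupp.single (ConjClasses.mk (Equiv.swap (0:Fin 3) 1)) 1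
      + Finsupp.single (ConjClasses.mk (Equiv.swap (0:Fin 3) 1)⁻¹) 1 ∈ bRel G3 :=
    AddSubgroup.subset_closure (Set.mem_insert_of_mem _ ⟨Equiv.swap 0 1, rfl⟩)
  have hainv : ConjClasses.mk a⁻¹ = ConjClasses.mk a :=
    ConjClasses.mk_eq_mk_iff_isConj.2 (isConj_a_inv ha3 hane).symm
  have htinv : (Equiv.swap (0:Fin 3) 1)⁻¹ = Equiv.swap (0:Fin 3) 1 := by decide
  rw [hainv] at ga
  rw [htinv] at gt
  rw [← Finsupp.single_add] at ga gt
  have hx := decomp ha3 hane x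
  rw [hx, hka, hkt]
  refine AddSubgroup.add_mem _ (AddSubgroup.add_mem _ ?_ ?_) ?_
  · have := AddSubgroup.zsmul_mem _ g1 (x (ConjClasses.mk 1))
    rwa [Finsupp.smul_single, smul_eq_mul, mul_one] at this
  · have := AddSubgroup.zsmul_mem _ ga ka
    rwa [Finsupp.smul_single, smul_eq_mul, mul_add, mul_one] at this
  · have := AddSubgroup.zsmul_mem _ gt kt
    rwa [Finsupp.smul_single, smul_eq_mul, mul_add, mul_one,
      show ConjClasses.mk (Equiv.swap (0:Fin 3) 1) = tauCl from rfl] at this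

/-- The descended map `BG S₃ →+ ZMod 2`. -/
noncomputable def qMap (ha3 : a ^ 3 = 1) (hane : a ≠ 1) : BG G3 →+ ZMod 2 :=
  QuotientAddGroup.lift _ ((phiA a).comp (lambdaKer G3).subtype)
    (by
      intro x hx
      have : (x : ConjClasses G3 →₀ ℤ) ∈ bRel G3 := hx
      exact bRel_le_ker ha3 hane this)

lemma qMap_mk (ha3 : a ^ 3 = 1) (hane : a ≠ 1) (x : lambdaKer G3) :
    qMap ha3 hane (QuotientAddGroup.mk x) = phiA a (x : ConjClasses G3 →₀ ℤ) := rfl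

lemma qMap_injective (ha3 : a ^ 3 = 1) (hane : a ≠ 1) : Function.Injective (qMap ha3 hane) := by
  rw [injective_iff_map_eq_zero]
  intro x hx
  induction x using QuotientAddGroup.induction_on with
  | H y =>
    rw [qMap_mk] at hx
    rw [QuotientAddGroup.eq_zero_iff]
    have hA : Even ((y : ConjClasses G3 →₀ ℤ) (ConjClasses.mk a)) := by
      rw [phiA_apply] at hx
      obtain ⟨k, hk⟩ := (ZMod.intCast_zmod_eq_zero_iff_dvd _ 2).1 hx
      exact ⟨k, by omega⟩
    have hT : Even ((y : ConjClasses G3 →₀ ℤ) tauCl) :=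
      even_tau_of_mem_lambdaKer ha3 hane y.2
    exact mem_bRel_of_even ha3 hane hA hT

lemma bdatum_singleton : bdatum G3 [a] = Finsupp.single (ConjClasses.mk a) 1 := by
  simp [bdatum]

lemma qMap_gen (ha3 : a ^ 3 = 1) (hane : a ≠ 1) (h : bdatum G3 [a] ∈ lambdaKer G3) :
    qMap ha3 hane (bmk [a] h) = 1 := by
  have h0 : qMap ha3 hane (bmk [a] h) = phiA a (bdatum G3 [a]) := rfl
  rw [h0, bdatum_singleton, phiA_apply, Finsupp.single_eq_same]
  decide

end Aux

/-- For `G = S₃` and `a ∈ S₃` of order 3 with conjugacy class `â`, the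
group `𝔹_{S₃}` is cyclic of order 2, generated by the one-element datum `[â]`; in
particular `2 • [â] = 0` and `[â] ≠ 0`. -/
theorem BG_S3_cyclic_of_order_two (a : Equiv.Perm (Fin 3)) (ha : orderOf a = 3) :
    Nat.card (BG (Equiv.Perm (Fin 3))) = 2 ∧
    AddSubgroup.zmultiples (bmk [a] (bdatum_single_mem a ha)) = ⊤ ∧
    2 • (bmk [a] (bdatum_single_mem a ha)) = 0 ∧
    bmk [a] (bdatum_single_mem a ha) ≠ 0 := by
  classical
  have ha3 : a ^ 3 = 1 := by have := pow_orderOf_eq_one a; rwa [ha] at this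
  have hane : a ≠ 1 := by
    intro h; rw [h, orderOf_one] at ha; exact absurd ha (by norm_num)
  set g := bmk [a] (bdatum_single_mem a ha) with hg
  have hq1 : qMap ha3 hane g = 1 := qMap_gen ha3 hane _
  have hinj := qMap_injective ha3 hane
  have hsurj : Function.Surjective (qMap ha3 hane) := by
    intro z
    have h2 : ∀ w : ZMod 2, w = 0 ∨ w = 1 := by decide
    rcases h2 z with rfl | rfl
    · exact ⟨0, map_zero _⟩
    · exact ⟨g, hq1⟩
  have h2g : 2 • g = 0 := by
    apply hinj
    rw [map_nsmul, hq1, map_zero]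
    decide
  have hgne : g ≠ 0 := by
    intro h
    rw [h, map_zero] at hq1
    exact absurd hq1 (by decide)
  refine ⟨?_, ?_, h2g, hgne⟩
  · have := Nat.card_eq_of_bijective (⇑(qMap ha3 hane)) ⟨hinj, hsurj⟩
    rw [this, Nat.card_eq_fintype_card]
    rfl
  · rw [eq_top_iff]
    intro x _
    have hcase : qMap ha3 hane x = 0 ∨ qMap ha3 hane x = 1 := by
      have h2 : ∀ z : ZMod 2, z = 0 ∨ z = 1 := by decide
      exact h2 _
    rcases hcase with h | h
    · have : x = 0 := hinj (by rw [h, map_zero])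
      rw [this]; exact AddSubgroup.zero_mem _
    · have : x = g := hinj (by rw [h, hq1])
      rw [this]; exact AddSubgroup.mem_zmultiples _
end

section
/- Let $f:H\to G$ be an injective homomorphism of finite abelian groups. Then the induced homomorphism $\mathbb{B}_f:\mathbb{B}_H\to\mathbb{B}_G$ is injective. -/
open Finsupp

/-- The additive map on formal sums of conjugacy classes induced by a group homomorphism. -/
noncomputable def ccFinsuppMap {H G : Type*} [Group H] [Group G] (f : H →* G) :
    (ConjClasses H →₀ ℤ) →+ (ConjClasses G →₀ ℤ) :=
  Finsupp.mapDomain.addMonoidHom (ConjClasses.map f)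

@[simp] lemma ccFinsuppMap_single {H G : Type*} [Group H] [Group G] (f : H →* G)
    (a : H) (k : ℤ) :
    ccFinsuppMap f (Finsupp.single (ConjClasses.mk a) k)
      = Finsupp.single (ConjClasses.mk (f a)) k := by
  simp [ccFinsuppMap, Finsupp.mapDomain_single]
  rfl

lemma degMap_ccFinsuppMap {H G : Type*} [Group H] [Group G] (f : H →* G)
    (x : ConjClasses H →₀ ℤ) :
    degMap G (ccFinsuppMap f x)
      = MonoidHom.toAdditive (Abelianization.map f) (degMap H x) := by
  have : (degMap G).comp (ccFinsuppMap f)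
      = (MonoidHom.toAdditive (Abelianization.map f)).comp (degMap H) := by
    apply Finsupp.addHom_ext
    intro c k
    obtain ⟨a, rfl⟩ := ConjClasses.mk_surjective c
    simp
  exact DFunLike.congr_fun this x

lemma ccFinsuppMap_mem_lambdaKer {H G : Type*} [Group H] [Group G] (f : H →* G)
    {x : ConjClasses H →₀ ℤ} (hx : x ∈ lambdaKer H) :
    ccFinsuppMap f x ∈ lambdaKer G := by
  have hx' : degMap H x = 0 := hx
  simp [lambdaKer, AddMonoidHom.mem_ker, degMap_ccFinsuppMap, hx']

lemma ccFinsuppMap_bRel_le {H G : Type*} [Group H] [Group G] (f : H →* G) :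
    (bRel H).map (ccFinsuppMap f) ≤ bRel G := by
  rw [bRel, AddMonoidHom.map_closure, AddSubgroup.closure_le]
  rintro _ ⟨y, hy, rfl⟩
  rcases hy with h1 | ⟨γ, rfl⟩
  · subst h1
    apply AddSubgroup.subset_closure
    left
    simp
  · apply AddSubgroup.subset_closure
    right
    exact ⟨f γ, by simp⟩

/-- The functorial homomorphism `𝔹_f : 𝔹_H → 𝔹_G` induced by a group homomorphism
`f : H → G`. -/
noncomputable def BMap {H G : Type*} [Group H] [Group G] (f : H →* G) : BG H →+ BG G :=
  QuotientAddGroup.map _ _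
    (((ccFinsuppMap f).comp (lambdaKer H).subtype).codRestrict (lambdaKer G)
      (fun x => ccFinsuppMap_mem_lambdaKer f x.2))
    (by
      intro x hx
      rw [AddSubgroup.mem_addSubgroupOf] at hx
      rw [AddSubgroup.mem_comap, AddSubgroup.mem_addSubgroupOf]
      exact ccFinsuppMap_bRel_le f (AddSubgroup.mem_map_of_mem _ hx))

section AuxComm

variable {G : Type*} [CommGroup G]

open scoped Classical

lemma single_mk_apply (a b : G) (k : ℤ) :
    (Finsupp.single (ConjClasses.mk a) k) (ConjClasses.mk b) = if a = b then k else 0 := by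
  rw [Finsupp.single_apply]
  simp [ConjClasses.mk_injective.eq_iff]

lemma single_one_mem_bRel (k : ℤ) :
    Finsupp.single (ConjClasses.mk (1 : G)) k ∈ bRel G := by
  have h : Finsupp.single (ConjClasses.mk (1 : G)) (1:ℤ) ∈ bRel G :=
    AddSubgroup.subset_closure (Or.inl rfl)
  simpa [Finsupp.smul_single] using zsmul_mem h k

lemma pair_mem_bRel (γ : G) (k : ℤ) :
    Finsupp.single (ConjClasses.mk γ) k + Finsupp.single (ConjClasses.mk γ⁻¹) k ∈ bRel G := by
  have h : Finsupp.single (ConjClasses.mk γ) (1:ℤ)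
      + Finsupp.single (ConjClasses.mk γ⁻¹) (1:ℤ) ∈ bRel G :=
    AddSubgroup.subset_closure (Or.inr ⟨γ, rfl⟩)
  simpa [smul_add, Finsupp.smul_single] using zsmul_mem h k

/-- The subgroup of formal sums satisfying the obvious symmetry/parity conditions. -/
noncomputable def Ccond (G : Type*) [CommGroup G] : AddSubgroup (ConjClasses G →₀ ℤ) where
  carrier := {x | ∀ γ : G, x (ConjClasses.mk γ) = x (ConjClasses.mk γ⁻¹) ∧
    (γ ≠ 1 → γ⁻¹ = γ → (2:ℤ) ∣ x (ConjClasses.mk γ))}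
  add_mem' := by
    intro a b ha hb γ
    obtain ⟨h1, h2⟩ := ha γ; obtain ⟨h3, h4⟩ := hb γ
    exact ⟨by simp [h1, h3], fun hn hi => by
      simpa using dvd_add (h2 hn hi) (h4 hn hi)⟩
  zero_mem' := by intro γ; simp
  neg_mem' := by
    intro a ha γ
    obtain ⟨h1, h2⟩ := ha γ
    exact ⟨by simp [h1], fun hn hi => by simpa using (h2 hn hi)⟩

lemma bRel_le_Ccond : bRel G ≤ Ccond G := by
  rw [bRel, AddSubgroup.closure_le]
  rintro x (rfl | ⟨γ, rfl⟩) δ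
  · refine ⟨?_, fun hn _ => ?_⟩
    · simp only [single_mk_apply]
      by_cases h : δ = 1 <;> simp [h, eq_comm, inv_eq_one]
    · rw [single_mk_apply, if_neg (fun h => hn h.symm)]
      exact dvd_zero 2
  · simp only [Finsupp.add_apply, single_mk_apply]
    constructor
    · simp only [inv_inj, inv_eq_iff_eq_inv, inv_inv]
      apply add_comm
    · intro hn hi
      by_cases h : γ = δ
      · have h2 : γ⁻¹ = δ := by rw [h]; exact hi
        rw [if_pos h, if_pos h2]
        exact ⟨1, by ring⟩
      · have h2 : ¬ γ⁻¹ = δ := fun h' => h ((inv_eq_iff_eq_inv.mp h').trans hi)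
        simp [h, h2]

lemma card_step {x s : ConjClasses G →₀ ℤ} {c : ConjClasses G} (hc : c ∈ x.support)
    (h : ∀ d, d ≠ c → (x - s) d ≠ 0 → x d ≠ 0) (h0 : (x - s) c = 0) {n : ℕ}
    (hn : x.support.card ≤ n + 1) : (x - s).support.card ≤ n := by
  have hsub : (x - s).support ⊆ x.support.erase c := by
    intro d hd
    rw [Finsupp.mem_support_iff] at hd
    rcases eq_or_ne d c with rfl | hdc
    · exact absurd h0 hd
    · exact Finset.mem_erase.2 ⟨hdc, Finsupp.mem_support_iff.2 (h d hdc hd)⟩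
  have h1 : (x - s).support.card ≤ (x.support.erase c).card := Finset.card_le_card hsub
  have h2 : (x.support.erase c).card < x.support.card := Finset.card_erase_lt_of_mem hc
  omega

lemma Ccond_le_bRel : Ccond G ≤ bRel G := by
  suffices H : ∀ n (x : ConjClasses G →₀ ℤ), x ∈ Ccond G → x.support.card ≤ n →
      x ∈ bRel G by
    exact fun x hx => H _ x hx le_rfl
  intro n
  induction n with
  | zero =>
      intro x _ hc
      have : x = 0 := by rwa [Nat.le_zero, Finsupp.card_support_eq_zero] at hc
      rw [this]; exact zero_mem _
  | succ n ih =>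
      intro x hx hc
      by_cases h0 : x = 0
      · rw [h0]; exact zero_mem _
      obtain ⟨c, hcmem⟩ := Finsupp.support_nonempty_iff.mpr h0
      obtain ⟨γ, rfl⟩ := ConjClasses.mk_surjective c
      rcases eq_or_ne γ 1 with rfl | hγ1
      · -- the class of 1
        set s := Finsupp.single (ConjClasses.mk (1:G)) (x (ConjClasses.mk (1:G))) with hs
        have hsmem : s ∈ bRel G := single_one_mem_bRel _
        have hxs : x - s ∈ Ccond G := sub_mem hx (bRel_le_Ccond hsmem)
        have h0' : (x - s) (ConjClasses.mk (1:G)) = 0 := by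
          simp [hs, Finsupp.sub_apply, single_mk_apply]
        have hcard : (x - s).support.card ≤ n := by
          refine card_step hcmem (fun d hd _ => ?_) h0' hc
          intro hxd
          obtain ⟨δ, rfl⟩ := ConjClasses.mk_surjective d
          have hδ : (1:G) ≠ δ := fun h => hd (congrArg ConjClasses.mk h.symm)
          rw [Finsupp.sub_apply, hs, single_mk_apply, if_neg hδ, sub_zero] at *
          simp_all
        have := ih (x - s) hxs hcard
        simpa using add_mem this hsmem
      rcases eq_or_ne γ⁻¹ γ with hinv | hinv
      · -- an involution
        obtain ⟨k, hk⟩ := (hx γ).2 hγ1 hinv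
        set s := Finsupp.single (ConjClasses.mk γ) (x (ConjClasses.mk γ)) with hs
        have hsmem : s ∈ bRel G := by
          have := pair_mem_bRel γ k
          rw [hinv, ← Finsupp.single_add] at this
          rwa [hs, hk, two_mul]
        have hxs : x - s ∈ Ccond G := sub_mem hx (bRel_le_Ccond hsmem)
        have h0' : (x - s) (ConjClasses.mk γ) = 0 := by
          simp [hs, Finsupp.sub_apply, single_mk_apply]
        have hcard : (x - s).support.card ≤ n := by
          refine card_step hcmem (fun d hd _ => ?_) h0' hc
          intro hxd
          obtain ⟨δ, rfl⟩ := ConjClasses.mk_surjective d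
          have hδ : γ ≠ δ := fun h => hd (congrArg ConjClasses.mk h.symm)
          rw [Finsupp.sub_apply, hs, single_mk_apply, if_neg hδ, sub_zero] at *
          simp_all
        have := ih (x - s) hxs hcard
        simpa using add_mem this hsmem
      · -- a genuine pair
        set s := Finsupp.single (ConjClasses.mk γ) (x (ConjClasses.mk γ))
          + Finsupp.single (ConjClasses.mk γ⁻¹) (x (ConjClasses.mk γ)) with hs
        have hsmem : s ∈ bRel G := pair_mem_bRel γ _
        have hxs : x - s ∈ Ccond G := sub_mem hx (bRel_le_Ccond hsmem)
        have hne : γ ≠ γ⁻¹ := fun h => hinv h.symm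
        have h0' : (x - s) (ConjClasses.mk γ) = 0 := by
          simp [hs, Finsupp.sub_apply, Finsupp.add_apply, single_mk_apply, if_neg hinv]
        have h0'' : (x - s) (ConjClasses.mk γ⁻¹) = 0 := by
          rw [Finsupp.sub_apply, hs, Finsupp.add_apply, single_mk_apply, single_mk_apply,
            if_neg hne, if_pos rfl, ← (hx γ).1]
          ring
        have hcard : (x - s).support.card ≤ n := by
          refine card_step hcmem (fun d hd hd' => ?_) h0' hc
          obtain ⟨δ, rfl⟩ := ConjClasses.mk_surjective d
          have hδ : γ ≠ δ := fun h => hd (congrArg ConjClasses.mk h.symm)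
          rcases eq_or_ne γ⁻¹ δ with rfl | hδ'
          · exact absurd h0'' hd'
          · rw [Finsupp.sub_apply, hs, Finsupp.add_apply, single_mk_apply, single_mk_apply,
              if_neg hδ, if_neg hδ', add_zero, sub_zero] at hd'
            exact hd'
        have := ih (x - s) hxs hcard
        simpa using add_mem this hsmem

end AuxComm

lemma mem_Ccond_of_map {H G : Type*} [CommGroup H] [CommGroup G] (f : H →* G)
    (hf : Function.Injective f) {x : ConjClasses H →₀ ℤ}
    (hx : ccFinsuppMap f x ∈ Ccond G) : x ∈ Ccond H := by
  have hinj : Function.Injective (ConjClasses.map f) := by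
    intro c d h
    obtain ⟨a, rfl⟩ := ConjClasses.mk_surjective c
    obtain ⟨b, rfl⟩ := ConjClasses.mk_surjective d
    have h' : ConjClasses.mk (f a) = ConjClasses.mk (f b) := h
    exact congrArg ConjClasses.mk (hf (ConjClasses.mk_injective h'))
  have happ : ∀ a : H, (ccFinsuppMap f x) (ConjClasses.mk (f a)) = x (ConjClasses.mk a) := by
    intro a
    have h1 : ConjClasses.mk (f a) = ConjClasses.map f (ConjClasses.mk a) := rfl
    have h2 : ccFinsuppMap f x = Finsupp.mapDomain (ConjClasses.map f) x := rfl
    rw [h1, h2]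
    exact Finsupp.mapDomain_apply hinj x _
  intro γ
  obtain ⟨h1, h2⟩ := hx (f γ)
  refine ⟨?_, fun hn hi => ?_⟩
  · rw [← happ γ, ← happ γ⁻¹, map_inv]
    exact h1
  · have := h2 (fun h => hn (hf (by simpa using h))) (by rw [← map_inv, hi])
    rwa [happ] at this

/-- If `f : H → G` is an injective homomorphism of finite abelian groups,
then the induced homomorphism `𝔹_f : 𝔹_H → 𝔹_G` is injective. -/
theorem BMap_injective_of_injective {H G : Type*} [CommGroup H] [CommGroup G]
    [Finite H] [Finite G] (f : H →* G) (hf : Function.Injective f) :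
    Function.Injective (BMap f) := by
  rw [injective_iff_map_eq_zero]
  intro a
  induction a using QuotientAddGroup.induction_on with
  | H x =>
    intro h
    have h' : QuotientAddGroup.mk
        ((((ccFinsuppMap f).comp (lambdaKer H).subtype).codRestrict (lambdaKer G)
          (fun x => ccFinsuppMap_mem_lambdaKer f x.2)) x)
        = (0 : BG G) := by
      rw [← h]
      rfl
    have hmem : ccFinsuppMap f (x : ConjClasses H →₀ ℤ) ∈ bRel G := by
      have := (QuotientAddGroup.eq_zero_iff _).1 h'
      rwa [AddSubgroup.mem_addSubgroupOf] at this
    have hx : (x : ConjClasses H →₀ ℤ) ∈ bRel H :=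
      Ccond_le_bRel (mem_Ccond_of_map f hf (bRel_le_Ccond hmem))
    exact (QuotientAddGroup.eq_zero_iff _).2 (by rwa [AddSubgroup.mem_addSubgroupOf])
end
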